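/- If the edge lengths l₁,…,l_E of a star graph are pairwise rationally independent (no two ratios lᵢ/lⱼ rational for i ≠ j), then every eigenvalue k² > 0 of the star graph (Dirichlet at the boundary, δ-coupling at the center) is simple: the space of solutions is at most one-dimensional. -/

import Mathlib

open Real Set

lemma ode_rep (k L : ℝ) (hk : k ≠ 0) (u u' : ℝ → ℝ)
    (h1 : ∀ x ∈ Icc 0 L, HasDerivAt u (u' x) x)
    (h2 : ∀ x ∈ Icc 0 L, HasDerivAt u' (-(k ^ 2) * u x) x) :
    ∀ x ∈ Icc 0 L, u x = u 0 * cos (k * x) + (u' 0 / k) * sin (k * x) := by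
  set a := u 0
  set b := u' 0
  set h : ℝ → ℝ := fun x => u x - (a * cos (k * x) + (b / k) * sin (k * x)) with hh
  set hd : ℝ → ℝ := fun x => u' x - (-(a * k) * sin (k * x) + b * cos (k * x)) with hhd
  have hkx : ∀ x : ℝ, HasDerivAt (fun y => k * y) k x := fun x => by simpa using (hasDerivAt_id x).const_mul k
  have H1 : ∀ x ∈ Icc 0 L, HasDerivAt h (hd x) x := by
    intro x hx
    have d := (h1 x hx).sub ((((hkx x).cos).const_mul a).add (((hkx x).sin).const_mul (b / k)))
    convert (show HasDerivAt h _ x from d) using 1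
    simp only [hhd]
    field_simp
  have H2 : ∀ x ∈ Icc 0 L, HasDerivAt hd (-(k ^ 2) * h x) x := by
    intro x hx
    have d := (h2 x hx).sub ((((hkx x).sin).const_mul (-(a * k))).add (((hkx x).cos).const_mul b))
    convert (show HasDerivAt hd _ x from d) using 1
    simp only [hh]
    field_simp
    ring
  set En : ℝ → ℝ := fun x => h x * h x + (hd x * hd x) / k ^ 2 with hEn
  have HE : ∀ x ∈ Icc 0 L, HasDerivAt En 0 x := by
    intro x hx
    have d := ((H1 x hx).mul (H1 x hx)).add (((H2 x hx).mul (H2 x hx)).div_const (k ^ 2))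
    convert (show HasDerivAt En _ x from d) using 1
    field_simp
    ring
  have hconst : ∀ x ∈ Icc 0 L, En x = En 0 := by
    apply constant_of_has_deriv_right_zero
    · exact fun x hx => (HE x hx).continuousAt.continuousWithinAt
    · exact fun x hx => ((HE x (Ico_subset_Icc_self hx)).hasDerivWithinAt)
  have hE0 : En 0 = 0 := by
    simp only [hEn, hh, hhd]
    simp [a, b, mul_zero, Real.cos_zero, Real.sin_zero]
  intro x hx
  have hx0 : En x = 0 := (hconst x hx).trans hE0
  have h1' : h x * h x + (hd x * hd x) / k ^ 2 = 0 := hx0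
  clear_value h hd En
  have hk2 : (0:ℝ) < k ^ 2 := by positivity
  have hsq1 : 0 ≤ h x * h x := mul_self_nonneg _
  have hsq2 : 0 ≤ (hd x * hd x) / k ^ 2 := div_nonneg (mul_self_nonneg _) (le_of_lt hk2)
  have hle : h x * h x ≤ 0 := by linarith
  have : h x = 0 := mul_self_eq_zero.mp (le_antisymm hle hsq1)
  simp only [hh] at this
  linarith

/-- If the edge lengths of a star graph are pairwise rationally independent, then every
positive eigenvalue of the star graph (Dirichlet boundary, δ-coupling at the center) is
simple: any two eigenfunctions for the same `k` are proportional. -/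
theorem star_graph_simple_spectrum (E : ℕ) (hE : 0 < E) (l : Fin E → ℝ)
    (hl : ∀ i, 0 < l i) (hirr : ∀ i j, i ≠ j → Irrational (l i / l j))
    (α₀ k : ℝ) (hk : 0 < k)
    (f f' g g' : Fin E → ℝ → ℝ) (f₀ g₀ : ℝ)
    (hf1 : ∀ i, ∀ x ∈ Icc 0 (l i), HasDerivAt (f i) (f' i x) x)
    (hf2 : ∀ i, ∀ x ∈ Icc 0 (l i), HasDerivAt (f' i) (-(k ^ 2) * f i x) x)
    (hfD : ∀ i, f i (l i) = 0) (hfc : ∀ i, f i 0 = f₀)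
    (hfδ : ∑ i, f' i 0 = α₀ * f₀)
    (hg1 : ∀ i, ∀ x ∈ Icc 0 (l i), HasDerivAt (g i) (g' i x) x)
    (hg2 : ∀ i, ∀ x ∈ Icc 0 (l i), HasDerivAt (g' i) (-(k ^ 2) * g i x) x)
    (hgD : ∀ i, g i (l i) = 0) (hgc : ∀ i, g i 0 = g₀)
    (hgδ : ∑ i, g' i 0 = α₀ * g₀)
    (hfnontriv : ¬∀ i, ∀ x ∈ Icc 0 (l i), f i x = 0) :
    ∃ c : ℝ, ∀ i, ∀ x ∈ Icc 0 (l i), g i x = c * f i x := by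
  have hk0 : k ≠ 0 := ne_of_gt hk
  have repf : ∀ i, ∀ x ∈ Icc 0 (l i),
      f i x = f₀ * cos (k * x) + (f' i 0 / k) * sin (k * x) := by
    intro i x hx
    have := ode_rep k (l i) hk0 (f i) (f' i) (hf1 i) (hf2 i) x hx
    rwa [hfc i] at this
  have repg : ∀ i, ∀ x ∈ Icc 0 (l i),
      g i x = g₀ * cos (k * x) + (g' i 0 / k) * sin (k * x) := by
    intro i x hx
    have := ode_rep k (l i) hk0 (g i) (g' i) (hg1 i) (hg2 i) x hx
    rwa [hgc i] at this
  have hmem : ∀ i, l i ∈ Icc (0:ℝ) (l i) := fun i => ⟨(hl i).le, le_refl _⟩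
  have bf : ∀ i, f₀ * cos (k * l i) + (f' i 0 / k) * sin (k * l i) = 0 := by
    intro i
    rw [← repf i (l i) (hmem i)]
    exact hfD i
  have bg : ∀ i, g₀ * cos (k * l i) + (g' i 0 / k) * sin (k * l i) = 0 := by
    intro i
    rw [← repg i (l i) (hmem i)]
    exact hgD i
  -- at most one edge with sin (k * l i) = 0
  have uniq : ∀ i j, sin (k * l i) = 0 → sin (k * l j) = 0 → i = j := by
    intro i j hi hj
    by_contra hne
    obtain ⟨n, hn⟩ := Real.sin_eq_zero_iff.1 hi
    obtain ⟨m, hm⟩ := Real.sin_eq_zero_iff.1 hj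
    have hm0 : (m : ℝ) ≠ 0 := by
      intro h0
      rw [h0, zero_mul] at hm
      have : (0:ℝ) < k * l j := mul_pos hk (hl j)
      linarith
    have hpi : (0:ℝ) < π := Real.pi_pos
    apply hirr i j hne
    refine ⟨(n : ℚ) / (m : ℚ), ?_⟩
    push_cast
    rw [div_eq_div_iff hm0 (ne_of_gt (hl j))]
    have e : k * ((n:ℝ) * l j) = k * (l i * (m:ℝ)) := by
      calc k * ((n:ℝ) * l j) = (n:ℝ) * (k * l j) := by ring
        _ = (n:ℝ) * ((m:ℝ) * π) := by rw [← hm]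
        _ = (m:ℝ) * ((n:ℝ) * π) := by ring
        _ = (m:ℝ) * (k * l i) := by rw [← hn]
        _ = k * (l i * (m:ℝ)) := by ring
    have := mul_left_cancel₀ hk0 e
    linarith
  -- if the central value vanishes, all derivative data vanish
  have zlem : ∀ (u₀ : ℝ) (v : Fin E → ℝ), u₀ = 0 →
      (∀ i, u₀ * cos (k * l i) + (v i / k) * sin (k * l i) = 0) →
      (∑ i, v i = α₀ * u₀) → ∀ i, v i = 0 := by
    intro u₀ v hu0 hb hsum
    subst hu0
    have hb' : ∀ i, sin (k * l i) ≠ 0 → v i = 0 := by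
      intro i hs
      have := hb i
      rw [zero_mul, zero_add] at this
      have := (mul_eq_zero.1 this).resolve_right hs
      field_simp at this
      simpa using this
    intro i
    by_cases hs : sin (k * l i) = 0
    · have hrest : ∀ j ∈ Finset.univ, j ≠ i → v j = 0 := by
        intro j _ hj
        apply hb' j
        intro hsj
        exact hj (uniq j i hsj hs)
      have : ∑ j, v j = v i := Finset.sum_eq_single_of_mem i (Finset.mem_univ i) hrest
      rw [hsum, mul_zero] at this
      exact this.symm
    · exact hb' i hs
  -- the central value of f is nonzero
  have hf₀ : f₀ ≠ 0 := by
    intro h0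
    apply hfnontriv
    intro i x hx
    rw [repf i x hx, h0, zlem f₀ (fun i => f' i 0) h0 bf hfδ i]
    ring
  -- hence sin (k * l i) ≠ 0 for every i
  have hsin : ∀ i, sin (k * l i) ≠ 0 := by
    intro i hs
    have hc : cos (k * l i) ≠ 0 := by
      intro hc
      have := sin_sq_add_cos_sq (k * l i)
      rw [hs, hc] at this
      norm_num at this
    have := bf i
    rw [hs, mul_zero, add_zero, mul_eq_zero] at this
    exact hf₀ (this.resolve_right hc)
  refine ⟨g₀ / f₀, ?_⟩
  intro i x hx
  have hgi : g' i 0 = (g₀ / f₀) * f' i 0 := by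
    have h1 := bf i
    have h2 := bg i
    field_simp at h1 h2
    -- h1 : f₀ * cos * k + f' i 0 * sin = 0 (roughly); solve
    have hs := hsin i
    have e1 : f' i 0 * sin (k * l i) = -(f₀ * cos (k * l i)) * k := by linarith [h1]
    have e2 : g' i 0 * sin (k * l i) = -(g₀ * cos (k * l i)) * k := by linarith [h2]
    have : (g' i 0 - (g₀ / f₀) * f' i 0) * sin (k * l i) = 0 := by
      field_simp
      linear_combination f₀ * e2 - g₀ * e1
    have := (mul_eq_zero.1 this).resolve_right hs
    linarith
  rw [repg i x hx, repf i x hx, hgi]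
  field_simp
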